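/- arXiv:1812.07312 — 8 statements merged into one kernel-verified Lean document; each statement's English description precedes it below -/
import Mathlib

section
/- Let θ, a, b ∈ ℝ^m with a·θ > b·θ, and let F be the set of all implementable-with-payments allocation rules f : ℝ^m → {a, b}. Then the harmless set is H(θ, F) = {θ} ∪ {θ' ∈ ℝ^m : (a − b)·θ' < (a − b)·θ}. In particular, H(θ, F) equals the harmless set of a single critical allocation rule whose decision hyperplane {θ' : (a−b)·θ' = (a−b)·θ} passes through θ. -/
open Matrix BigOperators

/-- An allocation rule is implementable-with-payments if there is a payment rule
making truthful reporting optimal. -/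
def Implementable {m : ℕ} (f : (Fin m → ℝ) → (Fin m → ℝ)) : Prop :=
  ∃ p : (Fin m → ℝ) → ℝ, ∀ θ θ' : Fin m → ℝ, f θ ⬝ᵥ θ - p θ ≥ f θ' ⬝ᵥ θ - p θ'

/-- Weak monotonicity from implementability. -/
lemma impl_mono {m : ℕ} {f : (Fin m → ℝ) → (Fin m → ℝ)} (hf : Implementable f)
    (x y : Fin m → ℝ) : (f x - f y) ⬝ᵥ (x - y) ≥ 0 := by
  obtain ⟨p, hp⟩ := hf
  have h1 := hp x y
  have h2 := hp y x
  simp only [sub_dotProduct, dotProduct_sub]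
  linarith

/-- Lemma 1 / Corollary 1 (two allocations): when `θ` strictly prefers `a` to `b`,
the harmless set of all implementable-with-payments rules into `{a, b}` consists of
`θ` itself together with the open half-space below the critical allocation
hyperplane through `θ`. -/
theorem harmless_two_allocations {m : ℕ} (θ a b : Fin m → ℝ) (h : a ⬝ᵥ θ > b ⬝ᵥ θ) :
    {θ' : Fin m → ℝ | ∀ f : (Fin m → ℝ) → (Fin m → ℝ),
        (∀ x, f x = a ∨ f x = b) → Implementable f → f θ ⬝ᵥ θ ≥ f θ' ⬝ᵥ θ} =
      {θ} ∪ {θ' : Fin m → ℝ | (a - b) ⬝ᵥ θ' < (a - b) ⬝ᵥ θ} := by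
  ext θ'
  simp only [Set.mem_setOf_eq, Set.mem_union, Set.mem_singleton_iff]
  constructor
  · intro hH
    by_contra hc
    push_neg at hc
    obtain ⟨hne, hge⟩ := hc
    set t : ℝ := (a - b) ⬝ᵥ θ with ht
    set c : (Fin m → ℝ) → Prop := fun x => (a - b) ⬝ᵥ x > t ∨ x = θ' with hcdef
    have hcd : ∀ x, Decidable (c x) := fun x => Classical.dec _
    set f : (Fin m → ℝ) → (Fin m → ℝ) := fun x => if c x then a else b with hfdef
    set p : (Fin m → ℝ) → ℝ := fun x => if c x then t else 0 with hpdef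
    have hcge : ∀ x, c x → (a - b) ⬝ᵥ x ≥ t := by
      intro x hx
      rcases hx with hgt | rfl
      · exact hgt.le
      · exact hge
    have hrange : ∀ x, f x = a ∨ f x = b := by
      intro x
      by_cases hx : c x
      · left; simp [hfdef, hx]
      · right; simp [hfdef, hx]
    have himp : Implementable f := by
      refine ⟨p, fun x y => ?_⟩
      by_cases hx : c x <;> by_cases hy : c y
      · simp only [hfdef, hpdef, if_pos hx, if_pos hy]; exact le_refl _
      · simp only [hfdef, hpdef, if_pos hx, if_neg hy]
        have := hcge x hx
        rw [sub_dotProduct] at this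
        linarith
      · simp only [hfdef, hpdef, if_neg hx, if_pos hy]
        have hxle : (a - b) ⬝ᵥ x ≤ t := by
          by_contra hgt
          exact hx (Or.inl (lt_of_not_ge hgt))
        rw [sub_dotProduct] at hxle
        linarith
      · simp only [hfdef, hpdef, if_neg hx, if_neg hy]; exact le_refl _
    have hkey := hH f hrange himp
    have hcθ' : c θ' := Or.inr rfl
    have hcθ : ¬ c θ := by
      rintro (hgt | rfl)
      · exact lt_irrefl _ hgt
      · exact hne rfl
    have hfθ : f θ = b := by simp [hfdef, hcθ]
    have hfθ' : f θ' = a := by simp [hfdef, hcθ']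
    rw [hfθ, hfθ'] at hkey
    linarith
  · rintro (rfl | hlt)
    · intro f _ _; exact le_refl _
    · intro f hrange himp
      rcases hrange θ with hθa | hθb
      · rw [hθa]
        rcases hrange θ' with hθ'a | hθ'b
        · rw [hθ'a]
        · rw [hθ'b]; linarith
      · rcases hrange θ' with hθ'a | hθ'b
        · exfalso
          have := impl_mono himp θ θ'
          rw [hθb, hθ'a] at this
          simp only [sub_dotProduct, dotProduct_sub] at this hlt
          linarith
        · rw [hθb, hθ'b]
end

section
/- Let A ⊆ ℝ^m and θ ∈ ℝ^m. Let F be the set of all implementable-with-payments allocation rules f : ℝ^m → A, and let F₂ ⊆ F be the subset of those rules whose range is contained in a two-element subset of A. Then H(θ, F) = H(θ, F₂): a type is harmless for all implementable-with-payments rules into A if and only if it is harmless for all such rules using at most two allocations. -/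
open Matrix BigOperators

/-- Theorem 1: the harmless set for all implementable-with-payments rules into `A`
equals the harmless set for the subset of such rules whose range is contained in a
two-element subset of `A`. -/
theorem harmless_all_eq_harmless_pairs {m : ℕ} (A : Set (Fin m → ℝ)) (θ : Fin m → ℝ) :
    {θ' : Fin m → ℝ | ∀ f : (Fin m → ℝ) → (Fin m → ℝ),
        (∀ x, f x ∈ A) → Implementable f → f θ ⬝ᵥ θ ≥ f θ' ⬝ᵥ θ} =
    {θ' : Fin m → ℝ | ∀ f : (Fin m → ℝ) → (Fin m → ℝ),
        (∀ x, f x ∈ A) → Implementable f →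
        (∃ a ∈ A, ∃ b ∈ A, ∀ x, f x = a ∨ f x = b) →
        f θ ⬝ᵥ θ ≥ f θ' ⬝ᵥ θ} := by
  classical
  ext θ'
  simp only [Set.mem_setOf_eq]
  constructor
  · intro h f hA hI _
    exact h f hA hI
  · intro h f hA hI
    by_cases hθ : θ' = θ
    · subst hθ; exact le_refl _
    obtain ⟨p, hp⟩ := hI
    set a := f θ with ha
    set b := f θ' with hb
    set C : (Fin m → ℝ) → Prop := fun x => a ⬝ᵥ x - p θ > b ⬝ᵥ x - p θ' ∨ x = θ with hC
    set g : (Fin m → ℝ) → (Fin m → ℝ) := fun x => if C x then a else b with hg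
    have hCθ : C θ := Or.inr rfl
    have hCθ' : ¬ C θ' := by
      rintro (hgt | heq)
      · exact absurd (hp θ' θ) (by simpa using not_le.mpr hgt)
      · exact hθ heq
    -- key: at any x where C x holds, a is weakly optimal
    have hkey : ∀ x, C x → a ⬝ᵥ x - p θ ≥ b ⬝ᵥ x - p θ' := by
      rintro x (hgt | heq)
      · exact le_of_lt hgt
      · rw [heq]; exact hp θ θ'
    have hkey' : ∀ x, ¬ C x → b ⬝ᵥ x - p θ' ≥ a ⬝ᵥ x - p θ := by
      intro x hx
      simp only [hC, not_or, not_lt] at hx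
      exact hx.1
    have hgA : ∀ x, g x ∈ A := by
      intro x
      simp only [hg]
      split
      · exact hA θ
      · exact hA θ'
    have hgI : Implementable g := by
      refine ⟨fun x => if C x then p θ else p θ', ?_⟩
      intro x y
      simp only [hg]
      by_cases hx : C x <;> by_cases hy : C y <;>
        simp only [hx, hy, if_pos, if_neg, if_true, if_false]
      · exact le_refl _
      · exact hkey x hx
      · exact hkey' x hx
      · exact le_refl _
    have := h g hgA hgI ⟨a, hA θ, b, hA θ', fun x => by
      simp only [hg]; split
      · exact Or.inl rfl
      · exact Or.inr rfl⟩
    simpa [hg, if_pos hCθ, if_neg hCθ'] using this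
end

section
/- Let A ⊆ ℝ^m and let f : ℝ^m → A be implementable-with-payments. Then for any two types θ, θ' ∈ ℝ^m there exists an implementable-with-payments rule g : ℝ^m → {f(θ), f(θ')} whose range is contained in the pair {f(θ), f(θ')} and which satisfies g(θ) = f(θ) and g(θ') = f(θ'). -/
open Matrix BigOperators

/-- Restriction lemma (from the proof of Theorem 1): an implementable rule into `A`
can be restricted to the two allocations `f θ`, `f θ'` while preserving its values
at `θ` and `θ'` and remaining implementable-with-payments. -/
theorem restrict_to_two_allocations {m : ℕ} (A : Set (Fin m → ℝ))
    (f : (Fin m → ℝ) → (Fin m → ℝ)) (hfA : ∀ x, f x ∈ A) (hf : Implementable f)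
    (θ θ' : Fin m → ℝ) :
    ∃ g : (Fin m → ℝ) → (Fin m → ℝ), Implementable g ∧
      (∀ x, g x = f θ ∨ g x = f θ') ∧ g θ = f θ ∧ g θ' = f θ' := by
  classical
  obtain ⟨p, hp⟩ := hf
  set g : (Fin m → ℝ) → (Fin m → ℝ) := fun x =>
    if x = θ' then f θ'
    else if f θ ⬝ᵥ x - p θ ≥ f θ' ⬝ᵥ x - p θ' then f θ else f θ' with hg
  set q : (Fin m → ℝ) → ℝ := fun x =>
    if x = θ' then p θ'
    else if f θ ⬝ᵥ x - p θ ≥ f θ' ⬝ᵥ x - p θ' then p θ else p θ' with hq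
  have mem : ∀ y, (g y = f θ ∧ q y = p θ) ∨ (g y = f θ' ∧ q y = p θ') := by
    intro y
    by_cases hy : y = θ'
    · right; simp [hg, hq, hy]
    · by_cases hc : f θ ⬝ᵥ y - p θ ≥ f θ' ⬝ᵥ y - p θ'
      · left; constructor <;> simp only [hg, hq] <;> rw [if_neg hy, if_pos hc]
      · right; constructor <;> simp only [hg, hq] <;> rw [if_neg hy, if_neg hc]
  have key : ∀ x, (g x ⬝ᵥ x - q x ≥ f θ ⬝ᵥ x - p θ) ∧
      (g x ⬝ᵥ x - q x ≥ f θ' ⬝ᵥ x - p θ') := by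
    intro x
    by_cases hx : x = θ'
    · subst hx
      simp only [hg, hq, if_pos rfl]
      exact ⟨hp x θ, le_refl _⟩
    · by_cases hc : f θ ⬝ᵥ x - p θ ≥ f θ' ⬝ᵥ x - p θ'
      · simp only [hg, hq, if_neg hx, if_pos hc]
        exact ⟨le_refl _, hc⟩
      · push_neg at hc
        simp only [hg, hq, if_neg hx, if_neg (not_le.mpr hc)]
        exact ⟨le_of_lt hc, le_refl _⟩
  refine ⟨g, ⟨q, ?_⟩, ?_, ?_, ?_⟩
  · intro x y
    rcases mem y with ⟨h1, h2⟩ | ⟨h1, h2⟩ <;> rw [h1, h2]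
    · exact (key x).1
    · exact (key x).2
  · intro x
    rcases mem x with ⟨h1, _⟩ | ⟨h1, _⟩
    · exact Or.inl h1
    · exact Or.inr h1
  · by_cases hθ : θ = θ'
    · simp [hg, hθ]
    · simp only [hg]; rw [if_neg hθ, if_pos (hp θ θ')]
  · simp [hg]
end

section
/- Let θ ∈ ℝ^m, let A = {e₁, …, e_m} ⊆ ℝ^m be the set of standard basis vectors (deterministic allocations), and let F be the set of all implementable-with-payments rules f : ℝ^m → A. Then H(θ, F) = {θ} ∪ {θ' ∈ ℝ^m : for all indices i, j, if θ_i > θ_j then θ'_i − θ'_j < θ_i − θ_j}. That is, the harmless set for all deterministic implementable-with-payments mechanisms is the intersection, over all ordered pairs of assignments the agent is not indifferent between, of the open half-spaces bounded by the critical hyperplanes through θ and containing the origin, together with θ itself. -/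
open Matrix BigOperators

/-- Theorem 2: the harmless set for all deterministic implementable-with-payments
rules (whose allocations are standard basis vectors) is `θ` together with the
intersection of the open half-spaces below the critical hyperplanes through `θ`. -/
theorem harmless_deterministic {m : ℕ} (θ : Fin m → ℝ) :
    {θ' : Fin m → ℝ | ∀ f : (Fin m → ℝ) → (Fin m → ℝ),
        (∀ x, ∃ i : Fin m, f x = Pi.single i (1 : ℝ)) → Implementable f →
        f θ ⬝ᵥ θ ≥ f θ' ⬝ᵥ θ} =
    {θ} ∪ {θ' : Fin m → ℝ | ∀ i j : Fin m, θ i > θ j → θ' i - θ' j < θ i - θ j} := by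
  ext θ'
  simp only [Set.mem_setOf_eq, Set.mem_union, Set.mem_singleton_iff]
  constructor
  · intro h
    by_cases hθ : θ' = θ
    · exact Or.inl hθ
    · right
      intro i j hij
      by_contra hc
      push_neg at hc
      set c : ℝ := θ' i - θ' j with hcdef
      set f : (Fin m → ℝ) → (Fin m → ℝ) := fun x =>
        if x i - x j > c ∨ x = θ' then Pi.single i 1 else Pi.single j 1 with hfdef
      have hdet : ∀ x, ∃ k : Fin m, f x = Pi.single k (1 : ℝ) := by
        intro x
        by_cases hx : x i - x j > c ∨ x = θ'
        · exact ⟨i, by simp [hfdef, hx]⟩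
        · exact ⟨j, by simp [hfdef, hx]⟩
      have himp : Implementable f := by
        refine ⟨fun x => if x i - x j > c ∨ x = θ' then c else 0, ?_⟩
        intro x r
        by_cases hx : x i - x j > c ∨ x = θ' <;>
          by_cases hr : r i - r j > c ∨ r = θ' <;>
          simp [hfdef, hx, hr, single_dotProduct]
        · rcases hx with hx | hx
          · linarith
          · subst hx; linarith
        · push_neg at hx; linarith [hx.1]
      have hfθ : f θ = Pi.single j (1 : ℝ) := by
        have : ¬(θ i - θ j > c ∨ θ = θ') := by
          push_neg
          exact ⟨by linarith, fun e => hθ e.symm⟩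
        simp [hfdef, this]
      have hfθ' : f θ' = Pi.single i (1 : ℝ) := by
        simp [hfdef]
      have := h f hdet himp
      rw [hfθ, hfθ'] at this
      simp [single_dotProduct] at this
      linarith
  · rintro (rfl | h)
    · intro f _ _; exact le_refl _
    · intro f hdet himp
      obtain ⟨p, hp⟩ := himp
      obtain ⟨i, hi⟩ := hdet θ
      obtain ⟨j, hj⟩ := hdet θ'
      rw [hi, hj]
      simp only [single_dotProduct, one_mul, ge_iff_le]
      by_contra hc
      push_neg at hc
      have h1 := hp θ θ'
      have h2 := hp θ' θ
      rw [hi, hj] at h1 h2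
      simp only [single_dotProduct, one_mul, ge_iff_le] at h1 h2
      have h3 := h j i hc
      linarith
end

section
/- Let F_d be the set of all implementable-with-payments rules f : ℝ^m → {e₁, …, e_m} (deterministic truthful mechanisms), and let F_u be the set of all functions g : ℝ^m → ℝ^m expressible as a finite convex combination g = Σ_{k=1}^{K} α_k f_k with α_k ≥ 0, Σ_k α_k = 1, and each f_k ∈ F_d (allocation rules of universally truthful mechanisms). Then for every θ ∈ ℝ^m, H(θ, F_u) = H(θ, F_d): the harmless set of all universally truthful mechanisms equals the harmless set of all deterministic truthful mechanisms. -/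
open Matrix BigOperators

/-- A deterministic truthful allocation rule: implementable-with-payments and
always allocating a standard basis vector. -/
def DetTruthful {m : ℕ} (f : (Fin m → ℝ) → (Fin m → ℝ)) : Prop :=
  (∀ x, ∃ i : Fin m, f x = Pi.single i (1 : ℝ)) ∧ Implementable f

/-- Theorem 3: the harmless set of all universally truthful mechanisms (finite
convex combinations of deterministic truthful rules) equals the harmless set of
all deterministic truthful mechanisms. -/
theorem harmless_universally_truthful_eq_deterministic {m : ℕ} (θ : Fin m → ℝ) :
    {θ' : Fin m → ℝ | ∀ (K : ℕ) (α : Fin K → ℝ)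
        (f : Fin K → ((Fin m → ℝ) → (Fin m → ℝ))),
        (∀ k, 0 ≤ α k) → (∑ k, α k) = 1 → (∀ k, DetTruthful (f k)) →
        (∑ k, α k • f k θ) ⬝ᵥ θ ≥ (∑ k, α k • f k θ') ⬝ᵥ θ} =
    {θ' : Fin m → ℝ | ∀ f : (Fin m → ℝ) → (Fin m → ℝ),
        DetTruthful f → f θ ⬝ᵥ θ ≥ f θ' ⬝ᵥ θ} := by
  ext θ'
  simp only [Set.mem_setOf_eq]
  constructor
  · intro h f hf
    have := h 1 (fun _ => 1) (fun _ => f) (fun _ => zero_le_one) (by simp)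
      (fun _ => hf)
    simpa using this
  · intro h K α f hα hsum hf
    have key : ∀ x, (∑ k, α k • f k x) ⬝ᵥ θ = ∑ k, α k * (f k x ⬝ᵥ θ) := by
      intro x
      simp only [dotProduct, Finset.sum_apply, Pi.smul_apply, smul_eq_mul,
        Finset.sum_mul, Finset.mul_sum]
      rw [Finset.sum_comm]
      apply Finset.sum_congr rfl
      intros; apply Finset.sum_congr rfl
      intros; ring
    rw [key, key]
    exact Finset.sum_le_sum fun k _ =>
      mul_le_mul_of_nonneg_left (h (f k) (hf k)) (hα k)
end

section
/- Consider a single unit-demand agent and two items, with type space Θ = {θ ∈ ℝ² : θ₁ ≥ 0, θ₂ ≥ 0} and allocation set A = {(0,0), (1,0), (0,1)} ⊆ ℝ² (get nothing, item 1, or item 2). Let F be the set of all implementable-with-payments rules f : Θ → A, and let F_sa ⊆ F be the set of rules f for which there exist prices p₁ ≥ 0, p₂ ≥ 0 such that, setting P((0,0)) = 0, P((1,0)) = p₁, P((0,1)) = p₂, every θ' ∈ Θ receives a utility-maximizing allocation at these prices: f(θ')·θ' − P(f(θ')) ≥ a·θ' − P(a) for every a ∈ A (rules arising from the VCG mechanism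 for some profile of other agents' reports). Then for every θ ∈ Θ, H(θ, F) = H(θ, F_sa). -/
open Matrix BigOperators

/-- Type space of a unit-demand agent over two items: the nonnegative orthant. -/
def typeSpace : Set (Fin 2 → ℝ) := {θ | 0 ≤ θ 0 ∧ 0 ≤ θ 1}

/-- Allocations: receive nothing, item 1, or item 2. -/
def allocSet : Set (Fin 2 → ℝ) := {![0, 0], ![1, 0], ![0, 1]}

/-- Implementability-with-payments on the type space `typeSpace`. -/
def ImplementableOn (f : (Fin 2 → ℝ) → (Fin 2 → ℝ)) : Prop :=
  ∃ p : (Fin 2 → ℝ) → ℝ, ∀ θ ∈ typeSpace, ∀ θ' ∈ typeSpace,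
    f θ ⬝ᵥ θ - p θ ≥ f θ' ⬝ᵥ θ - p θ'

/-- A rule arising from VCG for some profile of the other agents' reports: there
are item prices `p₁, p₂ ≥ 0` (with the null allocation priced at `0`, so the price
of allocation `a` is `a ⬝ᵥ ![p₁, p₂]`) such that every type receives a
utility-maximizing allocation at these prices. -/
def VCGInduced (f : (Fin 2 → ℝ) → (Fin 2 → ℝ)) : Prop :=
  ∃ p₁ p₂ : ℝ, 0 ≤ p₁ ∧ 0 ≤ p₂ ∧ ∀ θ' ∈ typeSpace, ∀ a ∈ allocSet,
    f θ' ⬝ᵥ θ' - f θ' ⬝ᵥ ![p₁, p₂] ≥ a ⬝ᵥ θ' - a ⬝ᵥ ![p₁, p₂]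

open scoped Classical in
/-- A canonical utility-maximizing selection at item prices `q1, q2`. -/
noncomputable def sel (q1 q2 : ℝ) (x : Fin 2 → ℝ) : Fin 2 → ℝ :=
  if x 0 - q1 ≥ 0 ∧ x 0 - q1 ≥ x 1 - q2 then ![1,0]
  else if x 1 - q2 ≥ 0 then ![0,1] else ![0,0]

lemma sel_mem (q1 q2 : ℝ) (x : Fin 2 → ℝ) : sel q1 q2 x ∈ allocSet := by
  unfold sel allocSet; split_ifs <;> simp

lemma sel_max (q1 q2 : ℝ) (x : Fin 2 → ℝ) : ∀ a ∈ allocSet,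
    sel q1 q2 x ⬝ᵥ x - sel q1 q2 x ⬝ᵥ ![q1,q2] ≥ a ⬝ᵥ x - a ⬝ᵥ ![q1,q2] := by
  intro a ha
  simp only [allocSet, Set.mem_insert_iff, Set.mem_singleton_iff] at ha
  rcases ha with h|h|h <;> subst h <;> unfold sel <;> split_ifs with h1 h2 <;>
    simp_all [dotProduct, Fin.sum_univ_two] <;>
    (try linarith) <;>
    (rcases le_or_gt q1 (x 0) with hc | hc <;> [linarith [h1 hc]; linarith])

/-- Any rule whose value at every type is a utility maximizer at fixed nonnegative
item prices is VCG-induced and implementable; if moreover it realizes a strict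
harm at `θ` versus `θ'`, we get the desired counterexample rule. -/
lemma build {θ θ' : Fin 2 → ℝ} (hne : θ ≠ θ')
    (q1 q2 : ℝ) (hq1 : 0 ≤ q1) (hq2 : 0 ≤ q2) (A B : Fin 2 → ℝ)
    (hA : A ∈ allocSet) (hB : B ∈ allocSet)
    (hAmax : ∀ a ∈ allocSet, A ⬝ᵥ θ - A ⬝ᵥ ![q1,q2] ≥ a ⬝ᵥ θ - a ⬝ᵥ ![q1,q2])
    (hBmax : ∀ a ∈ allocSet, B ⬝ᵥ θ' - B ⬝ᵥ ![q1,q2] ≥ a ⬝ᵥ θ' - a ⬝ᵥ ![q1,q2])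
    (hval : A ⬝ᵥ θ < B ⬝ᵥ θ) :
    ∃ g : (Fin 2 → ℝ) → (Fin 2 → ℝ), (∀ x ∈ typeSpace, g x ∈ allocSet) ∧
      ImplementableOn g ∧ VCGInduced g ∧ ¬ (g θ ⬝ᵥ θ ≥ g θ' ⬝ᵥ θ) := by
  classical
  set g : (Fin 2 → ℝ) → (Fin 2 → ℝ) :=
    fun x => if x = θ' then B else if x = θ then A else sel q1 q2 x with hg
  have hgθ' : g θ' = B := by simp [hg]
  have hgθ : g θ = A := by simp [hg, hne]
  have hmem : ∀ x ∈ typeSpace, g x ∈ allocSet := by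
    intro x _
    by_cases h1 : x = θ'
    · simpa [hg, h1] using hB
    by_cases h2 : x = θ
    · simpa [hg, h1, h2, hne] using hA
    · simpa [hg, h1, h2] using sel_mem q1 q2 x
  have hmax : ∀ x ∈ typeSpace, ∀ a ∈ allocSet,
      g x ⬝ᵥ x - g x ⬝ᵥ ![q1,q2] ≥ a ⬝ᵥ x - a ⬝ᵥ ![q1,q2] := by
    intro x _ a ha
    by_cases h1 : x = θ'
    · subst h1; rw [hgθ']; exact hBmax a ha
    by_cases h2 : x = θ
    · subst h2; rw [hgθ]; exact hAmax a ha
    · simp only [hg, if_neg h1, if_neg h2]; exact sel_max q1 q2 x a ha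
  refine ⟨g, hmem, ?_, ⟨q1, q2, hq1, hq2, hmax⟩, ?_⟩
  · exact ⟨fun x => g x ⬝ᵥ ![q1,q2], fun x hx y hy =>
      hmax x hx (g y) (hmem y hy)⟩
  · rw [hgθ, hgθ']; linarith

/-- Corollary 2: the harmless set of all implementable-with-payments rules into
`allocSet` equals the harmless set of the single-agent rules derived from VCG. -/
theorem harmless_VCG {θ : Fin 2 → ℝ} (hθ : θ ∈ typeSpace) :
    {θ' ∈ typeSpace | ∀ f : (Fin 2 → ℝ) → (Fin 2 → ℝ),
        (∀ x ∈ typeSpace, f x ∈ allocSet) → ImplementableOn f →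
        f θ ⬝ᵥ θ ≥ f θ' ⬝ᵥ θ} =
    {θ' ∈ typeSpace | ∀ f : (Fin 2 → ℝ) → (Fin 2 → ℝ),
        (∀ x ∈ typeSpace, f x ∈ allocSet) → ImplementableOn f → VCGInduced f →
        f θ ⬝ᵥ θ ≥ f θ' ⬝ᵥ θ} := by
  ext θ'
  simp only [Set.mem_setOf_eq]
  constructor
  · rintro ⟨h1, h2⟩
    exact ⟨h1, fun f hf hi _ => h2 f hf hi⟩
  rintro ⟨hθ', hR⟩
  refine ⟨hθ', fun f hf hi => ?_⟩
  by_contra hlt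
  push_neg at hlt
  obtain ⟨p, hp⟩ := hi
  have hic1 := hp θ hθ θ' hθ'
  have hic2 := hp θ' hθ' θ hθ
  have hAmem := hf θ hθ
  have hBmem := hf θ' hθ'
  have hθ0 := hθ.1; have hθ1 := hθ.2; have hθ'0 := hθ'.1; have hθ'1 := hθ'.2
  simp only [allocSet, Set.mem_insert_iff, Set.mem_singleton_iff] at hAmem hBmem
  have hne : θ ≠ θ' := by
    rintro rfl; exact absurd hlt (lt_irrefl _)
  -- notation for dot products
  rcases hBmem with hB|hB|hB <;> rcases hAmem with hA|hA|hA <;>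
      rw [hA, hB] at hic1 hic2 hlt <;>
      simp only [dotProduct, Fin.sum_univ_two, Matrix.cons_val_zero,
        Matrix.cons_val_one, Matrix.head_cons, zero_mul, one_mul, add_zero,
        zero_add] at hic1 hic2 hlt
  -- B = ![0,0] cases: impossible since values are nonneg
  · linarith
  · linarith
  · linarith
  -- B = ![1,0], A = ![0,0]
  · have key1 : θ 0 ≤ p θ' - p θ := by linarith
    have key2 : θ 0 ≤ θ' 0 := by linarith
    obtain ⟨g, hg1, hg2, hg3, hg4⟩ :=
      build hne (θ 0) (θ 1 + θ' 1 + 1) hθ0 (by linarith) ![0,0] ![1,0]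
        (by simp [allocSet]) (by simp [allocSet])
        (by
          intro a ha
          simp only [allocSet, Set.mem_insert_iff, Set.mem_singleton_iff] at ha
          rcases ha with h|h|h <;> subst h <;>
            simp [dotProduct, Fin.sum_univ_two] <;> linarith)
        (by
          intro a ha
          simp only [allocSet, Set.mem_insert_iff, Set.mem_singleton_iff] at ha
          rcases ha with h|h|h <;> subst h <;>
            simp [dotProduct, Fin.sum_univ_two] <;> linarith)
        (by simp [dotProduct, Fin.sum_univ_two]; linarith)
    exact hg4 (hR g hg1 hg2 hg3)
  -- B = ![1,0], A = ![1,0] : impossible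
  · linarith
  -- B = ![1,0], A = ![0,1]
  · have key1 : θ 0 - θ 1 ≤ p θ' - p θ := by linarith
    have key2 : θ 0 - θ 1 ≤ θ' 0 - θ' 1 := by linarith
    obtain ⟨g, hg1, hg2, hg3, hg4⟩ :=
      build hne (θ 0 - θ 1) 0 (by linarith) le_rfl ![0,1] ![1,0]
        (by simp [allocSet]) (by simp [allocSet])
        (by
          intro a ha
          simp only [allocSet, Set.mem_insert_iff, Set.mem_singleton_iff] at ha
          rcases ha with h|h|h <;> subst h <;>
            simp [dotProduct, Fin.sum_univ_two] <;> linarith)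
        (by
          intro a ha
          simp only [allocSet, Set.mem_insert_iff, Set.mem_singleton_iff] at ha
          rcases ha with h|h|h <;> subst h <;>
            simp [dotProduct, Fin.sum_univ_two] <;> linarith)
        (by simp [dotProduct, Fin.sum_univ_two]; linarith)
    exact hg4 (hR g hg1 hg2 hg3)
  -- B = ![0,1], A = ![0,0]
  · have key1 : θ 1 ≤ p θ' - p θ := by linarith
    have key2 : θ 1 ≤ θ' 1 := by linarith
    obtain ⟨g, hg1, hg2, hg3, hg4⟩ :=
      build hne (θ 0 + θ' 0 + 1) (θ 1) (by linarith) hθ1 ![0,0] ![0,1]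
        (by simp [allocSet]) (by simp [allocSet])
        (by
          intro a ha
          simp only [allocSet, Set.mem_insert_iff, Set.mem_singleton_iff] at ha
          rcases ha with h|h|h <;> subst h <;>
            simp [dotProduct, Fin.sum_univ_two] <;> linarith)
        (by
          intro a ha
          simp only [allocSet, Set.mem_insert_iff, Set.mem_singleton_iff] at ha
          rcases ha with h|h|h <;> subst h <;>
            simp [dotProduct, Fin.sum_univ_two] <;> linarith)
        (by simp [dotProduct, Fin.sum_univ_two]; linarith)
    exact hg4 (hR g hg1 hg2 hg3)
  -- B = ![0,1], A = ![1,0]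
  · have key1 : θ 1 - θ 0 ≤ p θ' - p θ := by linarith
    have key2 : θ 1 - θ 0 ≤ θ' 1 - θ' 0 := by linarith
    obtain ⟨g, hg1, hg2, hg3, hg4⟩ :=
      build hne 0 (θ 1 - θ 0) le_rfl (by linarith) ![1,0] ![0,1]
        (by simp [allocSet]) (by simp [allocSet])
        (by
          intro a ha
          simp only [allocSet, Set.mem_insert_iff, Set.mem_singleton_iff] at ha
          rcases ha with h|h|h <;> subst h <;>
            simp [dotProduct, Fin.sum_univ_two] <;> linarith)
        (by
          intro a ha
          simp only [allocSet, Set.mem_insert_iff, Set.mem_singleton_iff] at ha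
          rcases ha with h|h|h <;> subst h <;>
            simp [dotProduct, Fin.sum_univ_two] <;> linarith)
        (by simp [dotProduct, Fin.sum_univ_two]; linarith)
    exact hg4 (hR g hg1 hg2 hg3)
  -- B = ![0,1], A = ![0,1] : impossible
  · linarith
end

section
/- Let a, b ∈ ℝ^m and let f : ℝ^m → {a, b} be implementable-with-payments. Suppose a reported type θ' ∈ ℝ^m satisfies (a − b)·θ' ≥ 0 (θ' weakly prefers a) and f(θ') = b. Then the harmful set of θ' is empty: for every type θ̂ ∈ ℝ^m, f(θ̂)·θ̂ ≥ f(θ')·θ̂, i.e., no agent can strictly benefit by reporting θ'. -/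
open Matrix BigOperators

/-- Case 2 of the reverse-approach analysis: if a report `θ'` weakly prefers `a`
but receives `b` under an implementable two-allocation rule, then its harmful set
is empty: no type can strictly benefit by reporting `θ'`. -/
theorem harmful_set_empty {m : ℕ} (a b : Fin m → ℝ)
    (f : (Fin m → ℝ) → (Fin m → ℝ)) (hrange : ∀ θ, f θ = a ∨ f θ = b)
    (hf : Implementable f) (θ' : Fin m → ℝ)
    (hpref : (a - b) ⬝ᵥ θ' ≥ 0) (hfθ' : f θ' = b) :
    ∀ θhat : Fin m → ℝ, f θhat ⬝ᵥ θhat ≥ f θ' ⬝ᵥ θhat := by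
  intro θhat
  obtain ⟨p, hp⟩ := hf
  rcases hrange θhat with h | h
  · -- f θhat = a
    have h1 := hp θhat θ'   -- a⬝θhat - p θhat ≥ b⬝θhat - p θ'
    have h2 := hp θ' θhat   -- b⬝θ' - p θ' ≥ a⬝θ' - p θhat
    rw [h, hfθ'] at *
    have hd : (a - b) ⬝ᵥ θ' = a ⬝ᵥ θ' - b ⬝ᵥ θ' := by
      simp [sub_dotProduct]
    have hd2 : (a - b) ⬝ᵥ θhat = a ⬝ᵥ θhat - b ⬝ᵥ θhat := by
      simp [sub_dotProduct]
    nlinarith [hpref]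
  · rw [h, hfθ']
end

section
/- Consider a single-minded bidder with one bundle: the type is a real number t (the value for the bundle), an allocation is a probability q ∈ [0, 1] of receiving the bundle, and an agent of type t reporting t' under rule q with payments p gets utility q(t')·t − p(t'). Let F be the set of all implementable-with-payments rules q : ℝ → [0, 1], i.e., those for which there exists p : ℝ → ℝ with q(t)·t − p(t) ≥ q(t')·t − p(t') for all t, t' ∈ ℝ. Then for every true value v > 0, the harmless set {t ∈ ℝ : q(v)·v ≥ q(t)·v for all q ∈ F} equals {t ∈ ℝ : t ≤ v}. That is, for 1-minded bidders the harmless reports are exactly the underbids, so verifying no overbidding suffices to implement every implementable-with-payments rule without money. -/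
/-- A single-minded allocation rule (a probability of receiving the bundle as a
function of the reported value) is implementable-with-payments if there is a
payment rule making truthful reporting optimal. -/
def Implementable1 (q : ℝ → ℝ) : Prop :=
  ∃ p : ℝ → ℝ, ∀ t t' : ℝ, q t * t - p t ≥ q t' * t - p t'

/-- For a 1-minded bidder with true value `v > 0`, the harmless reports for all
implementable-with-payments rules `q : ℝ → [0,1]` are exactly the underbids
`{t : t ≤ v}`. -/
theorem harmless_single_minded (v : ℝ) (hv : 0 < v) :
    {t : ℝ | ∀ q : ℝ → ℝ, (∀ s, q s ∈ Set.Icc (0 : ℝ) 1) → Implementable1 q →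
        q v * v ≥ q t * v} = {t : ℝ | t ≤ v} := by
  ext t
  simp only [Set.mem_setOf_eq]
  constructor
  · intro h
    by_contra ht
    push_neg at ht
    -- threshold rule at t
    set q : ℝ → ℝ := fun s => if t ≤ s then 1 else 0 with hq
    have hrange : ∀ s, q s ∈ Set.Icc (0 : ℝ) 1 := by
      intro s; simp only [hq]; split <;> simp
    have himp : Implementable1 q := by
      refine ⟨fun s => t * q s, ?_⟩
      intro a b
      simp only [hq]
      by_cases ha : t ≤ a <;> by_cases hb : t ≤ b <;> simp [ha, hb] <;> nlinarith
    have := h q hrange himp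
    have hqv : q v = 0 := by simp [hq, not_le.mpr ht]
    have hqt : q t = 1 := by simp [hq]
    rw [hqv, hqt] at this
    nlinarith
  · intro ht q hrange himp
    obtain ⟨p, hp⟩ := himp
    have h1 := hp t v
    have h2 := hp v t
    have key : (q v - q t) * (v - t) ≥ 0 := by nlinarith
    rcases ht.lt_or_eq with h | h
    · have hge : q t ≤ q v := by nlinarith
      nlinarith
    · rw [h]
end
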